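/- Let x_1, ..., x_K ∈ ℝ^d with ‖x_k‖₂ ≤ 1, λ ≥ 1, and V_k = λI + ∑_{τ<k} x_τ x_τᵀ. Then ∑_{k=1}^K min(1, x_kᵀ V_k⁻¹ x_k) ≤ 2d log(1 + K/(dλ)) ≤ 2d log(1 + K/λ). -/

import Mathlib

open Matrix

-- helper A: min 1 u ≤ 2 log (1+u) for u ≥ 0
lemma aux_min_le_two_log (u : ℝ) (hu : 0 ≤ u) : min 1 u ≤ 2 * Real.log (1 + u) := by
  have hlog2 : (0.6931471803 : ℝ) < Real.log 2 := Real.log_two_gt_d9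
  rcases le_or_gt 1 u with h | h
  · have h2 : Real.log 2 ≤ Real.log (1 + u) := by
      apply Real.log_le_log (by norm_num); linarith
    have : min 1 u = 1 := min_eq_left h
    rw [this]; linarith
  · have hmin : min 1 u = u := min_eq_right h.le
    rw [hmin]
    have hc := (strictConcaveOn_log_Ioi.concaveOn).2 (Set.mem_Ioi.2 (by norm_num : (0:ℝ) < 1))
      (Set.mem_Ioi.2 (by norm_num : (0:ℝ) < 2)) (by linarith : (0:ℝ) ≤ 1 - u) hu (by ring)
    simp only [smul_eq_mul, mul_one, Real.log_one] at hc
    have h15 : (1 - u) + u * 2 = 1 + u := by ring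
    rw [h15] at hc
    nlinarith

-- helper B: AM-GM
lemma aux_prod_le (d : ℕ) (hd : 0 < d) (μ : Fin d → ℝ) (hμ : ∀ i, 0 ≤ μ i) :
    ∏ i, μ i ≤ ((∑ i, μ i) / d) ^ d := by
  have hd' : (0:ℝ) < d := Nat.cast_pos.2 hd
  have hgm := Real.geom_mean_le_arith_mean_weighted Finset.univ (fun _ => (d:ℝ)⁻¹) μ
    (fun i _ => by positivity)
    (by simp [Finset.card_univ]; field_simp)
    (fun i _ => hμ i)
  have h1 : ∏ i, μ i = (∏ i, μ i ^ ((d:ℝ)⁻¹)) ^ d := by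
    rw [← Finset.prod_pow]
    congr 1; funext i
    rw [← Real.rpow_natCast (μ i ^ ((d:ℝ)⁻¹)) d, ← Real.rpow_mul (hμ i)]
    rw [inv_mul_cancel₀ (ne_of_gt hd'), Real.rpow_one]
  rw [h1]
  have h2 : (∑ i, μ i) / d = ∑ i : Fin d, (d:ℝ)⁻¹ * μ i := by
    rw [← Finset.mul_sum]; ring
  rw [h2]
  exact pow_le_pow_left₀ (Finset.prod_nonneg (fun i _ => Real.rpow_nonneg (hμ i) _)) hgm d

-- helper C: trace = sum of eigenvalues (real case)
lemma aux_trace_eq (d : ℕ) (A : Matrix (Fin d) (Fin d) ℝ) (hA : A.IsHermitian) :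
    A.trace = ∑ i, hA.eigenvalues i := by
  nth_rewrite 1 [hA.spectral_theorem]
  rw [Unitary.conjStarAlgAut_apply, trace_mul_cycle]
  rw [show (star (hA.eigenvectorUnitary : Matrix (Fin d) (Fin d) ℝ)) *
    (hA.eigenvectorUnitary : Matrix (Fin d) (Fin d) ℝ) = 1 from Unitary.coe_star_mul_self _,
    one_mul, trace_diagonal]
  simp

theorem stmt12 (d K : ℕ) (hd : 0 < d) (lam : ℝ) (hlam : 1 ≤ lam)
    (x : ℕ → Fin d → ℝ) (hx : ∀ k, x k ⬝ᵥ x k ≤ 1)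
    (V : ℕ → Matrix (Fin d) (Fin d) ℝ)
    (hV : ∀ k, V k =
      lam • (1 : Matrix (Fin d) (Fin d) ℝ) + ∑ τ ∈ Finset.range k, vecMulVec (x τ) (x τ)) :
    ∑ k ∈ Finset.range K, min 1 (x k ⬝ᵥ ((V k)⁻¹ *ᵥ x k))
      ≤ 2 * d * Real.log (1 + K / (d * lam)) ∧
    2 * d * Real.log (1 + K / (d * lam)) ≤ 2 * d * Real.log (1 + K / lam) := by
  have hlam0 : (0:ℝ) < lam := lt_of_lt_of_le one_pos hlam
  have hd' : (0:ℝ) < d := Nat.cast_pos.2 hd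
  -- rank one matrices are PSD
  have hPSD : ∀ τ : ℕ, (vecMulVec (x τ) (x τ)).PosSemidef := by
    intro τ
    rw [vecMulVec_eq Unit]
    have := posSemidef_conjTranspose_mul_self (replicateRow Unit (x τ))
    simpa [conjTranspose_replicateRow] using this
  -- V k is positive definite
  have hpd : ∀ k, (V k).PosDef := by
    intro k
    rw [hV k]
    have h1 : (lam • (1 : Matrix (Fin d) (Fin d) ℝ)).PosDef := by
      rw [smul_one_eq_diagonal]
      exact Matrix.PosDef.diagonal (fun i => hlam0)
    have h2 : (∑ τ ∈ Finset.range k, vecMulVec (x τ) (x τ)).PosSemidef :=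
      Finset.sum_induction _ _ (fun a b ha hb => ha.add hb) Matrix.PosSemidef.zero
        (fun τ _ => hPSD τ)
    exact h1.add_posSemidef h2
  set u : ℕ → ℝ := fun k => x k ⬝ᵥ ((V k)⁻¹ *ᵥ x k) with hu
  have hu_nonneg : ∀ k, 0 ≤ u k := by
    intro k
    have h := ((hpd k).posSemidef.inv).re_dotProduct_nonneg (x k)
    simpa [hu] using h
  -- determinant recursion
  have hdet : ∀ k, (V (k+1)).det = (V k).det * (1 + u k) := by
    intro k
    have hstep : V (k+1) = V k + vecMulVec (x k) (x k) := by
      rw [hV (k+1), hV k, Finset.sum_range_succ, add_assoc]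
    have hunit : IsUnit (V k).det := isUnit_iff_ne_zero.2 (ne_of_gt (hpd k).det_pos)
    rw [hstep, vecMulVec_eq Unit, det_add_replicateCol_mul_replicateRow hunit]
    congr 1
    rw [det_unique]
    simp only [Matrix.add_apply, one_apply_eq]
    congr 1
    rw [mul_apply]
    simp only [mul_apply, hu]
    rw [dotProduct_mulVec]
    simp [dotProduct, vecMul, dotProduct, Finset.sum_mul, replicateRow, replicateCol]
  have hdetpos : ∀ k, 0 < (V k).det := fun k => (hpd k).det_pos
  -- per-step bound
  have hstep : ∀ k, min 1 (u k) ≤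
      2 * (Real.log ((V (k+1)).det) - Real.log ((V k).det)) := by
    intro k
    have hlog : Real.log ((V (k+1)).det) = Real.log ((V k).det) + Real.log (1 + u k) := by
      rw [hdet k, Real.log_mul (ne_of_gt (hdetpos k)) (by nlinarith [hu_nonneg k])]
    rw [hlog]
    have := aux_min_le_two_log (u k) (hu_nonneg k)
    linarith
  -- telescoping
  have hsum : ∑ k ∈ Finset.range K, min 1 (u k)
      ≤ 2 * (Real.log ((V K).det) - Real.log ((V 0).det)) := by
    calc ∑ k ∈ Finset.range K, min 1 (u k)
        ≤ ∑ k ∈ Finset.range K,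
            (2 * (Real.log ((V (k+1)).det) - Real.log ((V k).det))) :=
          Finset.sum_le_sum (fun k _ => hstep k)
      _ = 2 * ∑ k ∈ Finset.range K,
            (Real.log ((V (k+1)).det) - Real.log ((V k).det)) := by
          rw [Finset.mul_sum]
      _ = 2 * (Real.log ((V K).det) - Real.log ((V 0).det)) := by
          rw [Finset.sum_range_sub (fun k => Real.log ((V k).det))]
  -- det V 0
  have hV0 : Real.log ((V 0).det) = d * Real.log lam := by
    have : V 0 = lam • (1 : Matrix (Fin d) (Fin d) ℝ) := by
      simpa using hV 0
    rw [this, det_smul, det_one, mul_one]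
    simp [Real.log_pow]
  -- trace bound
  have htr : (V K).trace ≤ d * lam + K := by
    rw [hV K, trace_add, trace_smul, trace_one, trace_sum]
    have h1 : ∀ τ ∈ Finset.range K, (vecMulVec (x τ) (x τ)).trace ≤ 1 := by
      intro τ _
      rw [vecMulVec_eq Unit, trace_replicateCol_mul_replicateRow]
      exact hx τ
    have h2 : ∑ τ ∈ Finset.range K, (vecMulVec (x τ) (x τ)).trace ≤ K := by
      calc _ ≤ ∑ τ ∈ Finset.range K, (1:ℝ) := Finset.sum_le_sum h1
        _ = K := by simp
    simp only [Fintype.card_fin, smul_eq_mul, mul_one]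
    linarith
  -- eigenvalue bound for det V K
  have hdetK : Real.log ((V K).det) ≤ d * Real.log (lam + K / d) := by
    have hherm := (hpd K).isHermitian
    have heig : ∀ i, 0 < hherm.eigenvalues i := fun i => (hpd K).eigenvalues_pos i
    have hdeteq : (V K).det = ∏ i, hherm.eigenvalues i := by
      have := hherm.det_eq_prod_eigenvalues
      simpa using this
    have htreq : (V K).trace = ∑ i, hherm.eigenvalues i := aux_trace_eq d (V K) hherm
    have hb : (∑ i, hherm.eigenvalues i) / d ≤ lam + K / d := by
      rw [← htreq, div_le_iff₀ hd']
      have : (lam + ↑K / ↑d) * ↑d = d * lam + K := by field_simp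
      rw [this]; exact htr
    have hprod : (V K).det ≤ (lam + K / d) ^ d := by
      rw [hdeteq]
      calc ∏ i, hherm.eigenvalues i ≤ ((∑ i, hherm.eigenvalues i) / d) ^ d :=
            aux_prod_le d hd _ (fun i => (heig i).le)
        _ ≤ (lam + K / d) ^ d := by
            apply pow_le_pow_left₀ _ hb
            exact div_nonneg (Finset.sum_nonneg fun i _ => (heig i).le) hd'.le
    calc Real.log ((V K).det) ≤ Real.log ((lam + K / d) ^ d) :=
          Real.log_le_log (hdetpos K) hprod
      _ = d * Real.log (lam + K / d) := by rw [Real.log_pow]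
  -- combine
  have hmain : ∑ k ∈ Finset.range K, min 1 (u k) ≤ 2 * d * Real.log (1 + K / (d * lam)) := by
    have h1 : Real.log (lam + K / d) - Real.log lam = Real.log (1 + K / (d * lam)) := by
      rw [← Real.log_div (by positivity) (ne_of_gt hlam0)]
      congr 1
      field_simp
    calc ∑ k ∈ Finset.range K, min 1 (u k)
        ≤ 2 * (Real.log ((V K).det) - Real.log ((V 0).det)) := hsum
      _ ≤ 2 * (d * Real.log (lam + K / d) - d * Real.log lam) := by
          rw [hV0]; linarith [hdetK]
      _ = 2 * d * (Real.log (lam + K / d) - Real.log lam) := by ring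
      _ = 2 * d * Real.log (1 + K / (d * lam)) := by rw [h1]
  refine ⟨hmain, ?_⟩
  have h2 : Real.log (1 + K / (d * lam)) ≤ Real.log (1 + K / lam) := by
    apply Real.log_le_log (by positivity)
    have : (K:ℝ) / (d * lam) ≤ K / lam := by
      apply div_le_div_of_nonneg_left (Nat.cast_nonneg K) hlam0
      have hd1 : (1:ℝ) ≤ d := Nat.one_le_cast.2 hd
      nlinarith
    linarith
  have : (0:ℝ) ≤ 2 * d := by positivity
  exact mul_le_mul_of_nonneg_left h2 this
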